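/- Let Δ and K be m×m real positive definite matrices with Δ ⪯ K, Q a real matrix with QᵀQ = Δ, and λ < 0. Then det(λI − (I − Q K⁻¹ Qᵀ)) = det((λ−1)K + Δ)/det(K), and this determinant is nonzero since (λ−1)K + Δ is negative definite. -/

import Mathlib

open Matrix

theorem det_char_poly_eval_neg
    {m : ℕ} (Δ K Q : Matrix (Fin m) (Fin m) ℝ)
    (hΔ : Δ.PosDef) (hK : K.PosDef) (hle : (K - Δ).PosSemidef)
    (hQ : Qᵀ * Q = Δ) (lam : ℝ) (hlam : lam < 0) :
    Matrix.det (lam • (1 : Matrix (Fin m) (Fin m) ℝ) - (1 - Q * K⁻¹ * Qᵀ))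
      = Matrix.det ((lam - 1) • K + Δ) / Matrix.det K ∧
    Matrix.det (lam • (1 : Matrix (Fin m) (Fin m) ℝ) - (1 - Q * K⁻¹ * Qᵀ)) ≠ 0 ∧
    (-((lam - 1) • K + Δ)).PosDef := by
  set c : ℝ := lam - 1 with hc
  have hcneg : c < 0 := by rw [hc]; linarith
  have hcne : c ≠ 0 := ne_of_lt hcneg
  have hKdet : K.det ≠ 0 := hK.det_pos.ne'
  -- Negative definiteness part
  have hsm : ((-lam) • K).PosDef := by
    refine ⟨?_, fun x hx => ?_⟩
    · show ((-lam) • K)ᴴ = (-lam) • K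
      rw [Matrix.conjTranspose_smul, hK.1.eq]
      norm_num
    · exact (hK.smul (show (0:ℝ) < -lam by linarith)).2 hx
  have hneg : (-((lam - 1) • K + Δ)).PosDef := by
    have h1 : (-((lam - 1) • K + Δ)) = (K - Δ) + (-lam) • K := by
      ext i j
      simp only [Matrix.sub_apply, Matrix.add_apply, Matrix.neg_apply, Matrix.smul_apply,
        smul_eq_mul]
      ring
    rw [h1]
    exact Matrix.PosDef.posSemidef_add hle hsm
  -- the determinant identity
  have key : Matrix.det (lam • (1 : Matrix (Fin m) (Fin m) ℝ) - (1 - Q * K⁻¹ * Qᵀ))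
      = Matrix.det ((lam - 1) • K + Δ) / Matrix.det K := by
    have e1 : lam • (1 : Matrix (Fin m) (Fin m) ℝ) - (1 - Q * K⁻¹ * Qᵀ)
        = c • (1 + (c⁻¹ • Q) * (K⁻¹ * Qᵀ)) := by
      rw [smul_add, Matrix.smul_mul, smul_smul, mul_inv_cancel₀ hcne, one_smul, hc]
      ext i j
      simp only [Matrix.sub_apply, Matrix.add_apply, Matrix.smul_apply, Matrix.one_apply,
        smul_eq_mul, Matrix.mul_assoc]
      by_cases h : i = j <;> simp [h] <;> ring
    rw [e1, Matrix.det_smul, Matrix.det_one_add_mul_comm]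
    have e2 : 1 + (K⁻¹ * Qᵀ) * (c⁻¹ • Q) = K⁻¹ * (K + c⁻¹ • Δ) := by
      rw [Matrix.mul_smul, Matrix.mul_assoc, hQ, Matrix.mul_add,
        Matrix.nonsing_inv_mul K (isUnit_iff_ne_zero.mpr hKdet), Matrix.mul_smul]
    rw [e2, Matrix.det_mul, Matrix.det_nonsing_inv, Ring.inverse_eq_inv]
    have e3 : c • (K + c⁻¹ • Δ) = (lam - 1) • K + Δ := by
      rw [smul_add, smul_smul, mul_inv_cancel₀ hcne, one_smul, hc]
    calc c ^ Fintype.card (Fin m) * ((K.det)⁻¹ * (K + c⁻¹ • Δ).det)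
        = (K.det)⁻¹ * (c ^ Fintype.card (Fin m) * (K + c⁻¹ • Δ).det) := by ring
      _ = (K.det)⁻¹ * (c • (K + c⁻¹ • Δ)).det := by rw [Matrix.det_smul]
      _ = ((lam - 1) • K + Δ).det / K.det := by rw [e3, div_eq_inv_mul]
  refine ⟨key, ?_, hneg⟩
  rw [key]
  have hd : ((lam - 1) • K + Δ).det ≠ 0 := by
    have := hneg.det_pos
    rw [Matrix.det_neg] at this
    intro h
    rw [h] at this
    simp at this
  exact div_ne_zero hd hKdet
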